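/- Let p, r ≥ 1 and q ≥ 0 be integers, and define f(x) = −((p+q)r)^{−1}·ln(1 − (I_x(q+1, p))^r). Then, as x → 0 from the right, f(x) = ((p+q)r)^{−1}·C(p+q, q+1)^r·x^{r(q+1)} + O(x^{r(q+1)+1}); that is, the function x ↦ f(x) − ((p+q)r)^{−1}·C(p+q, q+1)^r·x^{r(q+1)} is O(x^{r(q+1)+1}) as x → 0⁺, where C(p+q, q+1) denotes the binomial coefficient. -/

import Mathlib

/-- The regularized incomplete Beta function `I_x(a, b)` for positive integer
parameters `a, b`. -/
noncomputable def regIncBeta (a b : ℕ) (x : ℝ) : ℝ :=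
  (∫ t in (0:ℝ)..1, t ^ (a - 1) * (1 - t) ^ (b - 1))⁻¹ *
    ∫ t in (0:ℝ)..x, t ^ (a - 1) * (1 - t) ^ (b - 1)

open Asymptotics Filter Finset intervalIntegral

private lemma pow_isBigO_pow {m n : ℕ} (h : n ≤ m) :
    (fun x : ℝ => x ^ m) =O[nhdsWithin 0 (Set.Ioi 0)] fun x => x ^ n := by
  rw [Asymptotics.isBigO_iff]
  refine ⟨1, ?_⟩
  filter_upwards [Ioo_mem_nhdsGT_of_mem (Set.left_mem_Ico.2 one_pos)] with x hx
  rw [one_mul, Real.norm_eq_abs, Real.norm_eq_abs, abs_pow, abs_pow]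
  exact pow_le_pow_of_le_one (abs_nonneg x) (by rw [abs_of_pos hx.1]; exact hx.2.le) h

private lemma prod_fact (p q : ℕ) :
    (q.factorial : ℂ) * ∏ j ∈ range p, ((q : ℂ) + 1 + j) = ((p + q).factorial : ℂ) := by
  induction p with
  | zero => simp
  | succ n ih =>
    rw [Finset.prod_range_succ, ← mul_assoc, ih]
    have : (n + 1 + q).factorial = (n + q).factorial * (n + q + 1) := by
      rw [show n + 1 + q = (n + q) + 1 by ring, Nat.factorial_succ]; ring
    rw [this]; push_cast; ring

private lemma beta_eval (p q : ℕ) (hp : 1 ≤ p) :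
    ∫ t in (0:ℝ)..1, t ^ q * (1 - t) ^ (p - 1)
      = (q.factorial : ℝ) * (p - 1).factorial / (p + q).factorial := by
  have hre : 0 < Complex.re ((q : ℂ) + 1) := by simp; positivity
  have key := Complex.betaIntegral_eval_nat_add_one_right hre (p - 1)
  have hp1 : ((p - 1 : ℕ) : ℂ) + 1 = (p : ℂ) := by
    have : ((p - 1 : ℕ) : ℂ) = (p : ℂ) - 1 := by
      push_cast [Nat.cast_sub hp]; ring
    rw [this]; ring
  rw [hp1] at key
  have hof : Complex.betaIntegral ((q : ℂ) + 1) p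
      = ((∫ t in (0:ℝ)..1, t ^ q * (1 - t) ^ (p - 1) : ℝ) : ℂ) := by
    rw [Complex.betaIntegral, ← intervalIntegral.integral_ofReal]
    refine intervalIntegral.integral_congr fun x hx => ?_
    have h1 : ((q : ℂ) + 1) - 1 = ((q : ℕ) : ℂ) := by ring
    have h2 : (p : ℂ) - 1 = ((p - 1 : ℕ) : ℂ) := by rw [← hp1]; ring
    rw [h1, h2, Complex.cpow_natCast, Complex.cpow_natCast]
    push_cast
    ring
  rw [hof] at key
  have hprod : ∏ j ∈ range ((p-1) + 1), ((q : ℂ) + 1 + j)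
      = ((p + q).factorial : ℂ) / (q.factorial : ℂ) := by
    rw [Nat.sub_add_cancel hp, eq_div_iff (by exact_mod_cast q.factorial_ne_zero), mul_comm]
    exact prod_fact p q
  rw [hprod] at key
  have : ((∫ t in (0:ℝ)..1, t ^ q * (1 - t) ^ (p - 1) : ℝ) : ℂ)
      = (((q.factorial : ℝ) * (p - 1).factorial / (p + q).factorial : ℝ) : ℂ) := by
    rw [key]
    have h1 : ((p+q).factorial : ℂ) ≠ 0 := by exact_mod_cast (p+q).factorial_ne_zero
    have h2 : ((q).factorial : ℂ) ≠ 0 := by exact_mod_cast (q).factorial_ne_zero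
    push_cast
    field_simp
  exact_mod_cast this

private lemma int_asymp (p q : ℕ) (hp : 1 ≤ p) :
    (fun x : ℝ => (∫ t in (0:ℝ)..x, t ^ q * (1 - t) ^ (p - 1)) - x ^ (q + 1) / (q + 1))
      =O[nhdsWithin 0 (Set.Ioi 0)] fun x => x ^ (q + 2) := by
  rw [isBigO_iff]
  refine ⟨p, ?_⟩
  filter_upwards [Ioo_mem_nhdsGT_of_mem (Set.left_mem_Ico.2 one_pos)] with x hx
  have hx0 : (0:ℝ) < x := hx.1
  have hx1 : x < 1 := hx.2
  have hint1 : IntervalIntegrable (fun t : ℝ => t ^ q * (1 - t) ^ (p-1)) MeasureTheory.volume 0 x :=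
    (by fun_prop : Continuous fun t : ℝ => t ^ q * (1 - t) ^ (p-1)).intervalIntegrable 0 x
  have hint2 : IntervalIntegrable (fun t : ℝ => t ^ q) MeasureTheory.volume 0 x :=
    (by fun_prop : Continuous fun t : ℝ => t ^ q).intervalIntegrable 0 x
  have heq : (∫ t in (0:ℝ)..x, t ^ q * (1 - t) ^ (p-1)) - x ^ (q+1) / (q+1)
      = ∫ t in (0:ℝ)..x, (t ^ q * (1 - t) ^ (p-1) - t ^ q) := by
    rw [intervalIntegral.integral_sub hint1 hint2, integral_pow]
    norm_num
  rw [heq]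
  have bound : ∀ t ∈ Set.uIoc (0:ℝ) x, ‖t ^ q * (1 - t) ^ (p-1) - t ^ q‖ ≤ p * x ^ (q+1) := by
    intro t ht
    rw [Set.uIoc_of_le hx0.le] at ht
    have ht0 : 0 < t := ht.1
    have htx : t ≤ x := ht.2
    have ht1 : t ≤ 1 := le_trans htx hx1.le
    have h1t : 0 ≤ 1 - t := by linarith
    have hle1 : (1 - t) ^ (p-1) ≤ 1 := pow_le_one₀ h1t (by linarith)
    have hber : 1 - (p-1 : ℕ) * t ≤ (1 - t) ^ (p-1) := by
      have := one_add_mul_le_pow (a := -t) (by linarith) (p-1)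
      simpa [sub_eq_add_neg, mul_neg] using this
    have habs : ‖t ^ q * (1 - t) ^ (p-1) - t ^ q‖ = t ^ q * (1 - (1-t)^(p-1)) := by
      rw [Real.norm_eq_abs, show t ^ q * (1 - t) ^ (p-1) - t ^ q = -(t^q * (1 - (1-t)^(p-1))) by ring,
        abs_neg, abs_of_nonneg]
      exact mul_nonneg (pow_nonneg ht0.le q) (by linarith)
    rw [habs]
    have h1 : t ^ q ≤ x ^ q := pow_le_pow_left₀ ht0.le htx q
    have h2 : 1 - (1-t)^(p-1) ≤ p * x := by
      have : ((p-1:ℕ):ℝ) * t ≤ p * x := by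
        apply mul_le_mul _ htx ht0.le (Nat.cast_nonneg p)
        exact_mod_cast Nat.cast_le.mpr (Nat.sub_le p 1)
      linarith
    calc t ^ q * (1 - (1-t)^(p-1)) ≤ x ^ q * (p * x) := by
          apply mul_le_mul h1 h2 (by linarith [hber, mul_nonneg (Nat.cast_nonneg (p-1) : (0:ℝ) ≤ (p-1:ℕ)) ht0.le]) (by positivity)
      _ = p * x ^ (q+1) := by ring
  calc ‖∫ t in (0:ℝ)..x, (t ^ q * (1 - t) ^ (p-1) - t ^ q)‖
      ≤ p * x ^ (q+1) * |x - 0| := intervalIntegral.norm_integral_le_of_norm_le_const bound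
    _ = p * ‖x ^ (q+2)‖ := by
        rw [sub_zero, abs_of_pos hx0, Real.norm_eq_abs, abs_of_pos (by positivity)]; ring

private lemma choose_eq (p q : ℕ) (hp : 1 ≤ p) :
    (Nat.choose (p + q) (q + 1) : ℝ)
      = ((q.factorial : ℝ) * (p - 1).factorial / (p + q).factorial)⁻¹ / (q + 1) := by
  have h1 : q + 1 ≤ p + q := by omega
  have h2 : p + q - (q + 1) = p - 1 := by omega
  rw [Nat.cast_choose ℝ h1, h2, Nat.factorial_succ]
  have f1 : ((p+q).factorial : ℝ) ≠ 0 := by exact_mod_cast (p+q).factorial_ne_zero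
  have f2 : ((q).factorial : ℝ) ≠ 0 := by exact_mod_cast (q).factorial_ne_zero
  have f3 : ((p-1).factorial : ℝ) ≠ 0 := by exact_mod_cast (p-1).factorial_ne_zero
  have f4 : ((q:ℝ) + 1) ≠ 0 := by positivity
  push_cast
  rw [inv_div, div_div]
  rw [div_eq_div_iff (by positivity) (by positivity)]
  ring

private lemma reg_asymp (p q : ℕ) (hp : 1 ≤ p) :
    (fun x : ℝ => regIncBeta (q+1) p x - (Nat.choose (p+q) (q+1) : ℝ) * x ^ (q+1))
      =O[nhdsWithin 0 (Set.Ioi 0)] fun x => x ^ (q + 2) := by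
  have heq : (fun x : ℝ => regIncBeta (q+1) p x - (Nat.choose (p+q) (q+1) : ℝ) * x ^ (q+1))
      = fun x : ℝ => ((q.factorial : ℝ) * (p - 1).factorial / (p + q).factorial)⁻¹ *
          ((∫ t in (0:ℝ)..x, t ^ q * (1 - t) ^ (p - 1)) - x ^ (q+1) / (q+1)) := by
    funext x
    have f4 : ((q:ℝ) + 1) ≠ 0 := by positivity
    rw [regIncBeta]
    simp only [Nat.add_sub_cancel]
    rw [beta_eval p q hp, choose_eq p q hp]
    push_cast
    field_simp
  rw [heq]
  exact (int_asymp p q hp).const_mul_left _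

private lemma reg_bigO (p q : ℕ) (hp : 1 ≤ p) :
    (fun x : ℝ => regIncBeta (q+1) p x) =O[nhdsWithin 0 (Set.Ioi 0)] fun x => x ^ (q+1) := by
  have h1 := (reg_asymp p q hp).trans (pow_isBigO_pow (by omega : q + 1 ≤ q + 2))
  have h2 : (fun x : ℝ => (Nat.choose (p+q) (q+1) : ℝ) * x ^ (q+1))
      =O[nhdsWithin 0 (Set.Ioi 0)] fun x => x ^ (q+1) :=
    (isBigO_refl _ _).const_mul_left _
  simpa using h1.add h2

private lemma pow_diff_asymp (p q r : ℕ) (hp : 1 ≤ p) (hr : 1 ≤ r) :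
    (fun x : ℝ => (regIncBeta (q+1) p x) ^ r
        - ((Nat.choose (p+q) (q+1) : ℝ) * x ^ (q+1)) ^ r)
      =O[nhdsWithin 0 (Set.Ioi 0)] fun x => x ^ (r * (q+1) + 1) := by
  obtain ⟨r', rfl⟩ : ∃ r', r = r' + 1 := ⟨r - 1, by omega⟩
  set I := fun x : ℝ => regIncBeta (q+1) p x with hI
  set c : ℝ := (Nat.choose (p+q) (q+1) : ℝ)
  have key : (fun x : ℝ => I x ^ (r'+1) - (c * x ^ (q+1)) ^ (r'+1))
      = fun x : ℝ => (∑ i ∈ range (r'+1), I x ^ i * (c * x ^ (q+1)) ^ (r'+1-1-i))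
          * (I x - c * x ^ (q+1)) := by
    funext x; rw [geom_sum₂_mul]
  rw [key]
  have hsum : (fun x : ℝ => ∑ i ∈ range (r'+1), I x ^ i * (c * x ^ (q+1)) ^ (r'+1-1-i))
      =O[nhdsWithin 0 (Set.Ioi 0)] fun x => x ^ ((q+1) * r') := by
    refine Asymptotics.IsBigO.fun_sum fun i hi => ?_
    have hi' : i ≤ r' := by have := mem_range.mp hi; omega
    have h1 : (fun x : ℝ => I x ^ i) =O[nhdsWithin 0 (Set.Ioi 0)]
        fun x => (x ^ (q+1)) ^ i := (reg_bigO p q hp).pow i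
    have h2 : (fun x : ℝ => (c * x ^ (q+1)) ^ (r'+1-1-i)) =O[nhdsWithin 0 (Set.Ioi 0)]
        fun x => (x ^ (q+1)) ^ (r'+1-1-i) :=
      ((isBigO_refl (fun x : ℝ => x ^ (q+1)) _).const_mul_left c).pow _
    have h3 := h1.mul h2
    have e : (fun x : ℝ => (x ^ (q+1)) ^ i * (x ^ (q+1)) ^ (r'+1-1-i))
        = fun x : ℝ => x ^ ((q+1) * r') := by
      funext x
      rw [← pow_add, show i + (r'+1-1-i) = r' from by omega, pow_mul]
    rwa [e] at h3
  have hmul := hsum.mul (reg_asymp p q hp)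
  have e2 : (fun x : ℝ => x ^ ((q+1) * r') * x ^ (q + 2))
      = fun x : ℝ => x ^ ((r'+1) * (q+1) + 1) := by
    funext x; rw [← pow_add]; congr 1; ring
  rwa [e2] at hmul

open Asymptotics Filter in
theorem stmt3 (p q r : ℕ) (hp : 1 ≤ p) (hr : 1 ≤ r) :
    (fun x : ℝ =>
        -(((p + q) * r : ℝ))⁻¹ * Real.log (1 - (regIncBeta (q + 1) p x) ^ r) -
          (((p + q) * r : ℝ))⁻¹ * (Nat.choose (p + q) (q + 1) : ℝ) ^ r *
            x ^ (r * (q + 1)))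
      =O[nhdsWithin (0 : ℝ) (Set.Ioi 0)]
        fun x : ℝ => x ^ (r * (q + 1) + 1) := by
  set l := nhdsWithin (0:ℝ) (Set.Ioi 0)
  set I := fun x : ℝ => regIncBeta (q+1) p x with hI
  set c : ℝ := (Nat.choose (p+q) (q+1) : ℝ) with hc
  set c₀ : ℝ := (((p + q) * r : ℝ))⁻¹ with hc0
  set y := fun x : ℝ => I x ^ r with hy
  -- term 2
  have hterm2 : (fun x : ℝ => y x - c ^ r * x ^ (r * (q+1))) =O[l]
      fun x => x ^ (r * (q+1) + 1) := by
    have e : (fun x : ℝ => y x - c ^ r * x ^ (r * (q+1)))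
        = fun x : ℝ => I x ^ r - (c * x ^ (q+1)) ^ r := by
      funext x; rw [mul_pow, ← pow_mul, mul_comm (q+1) r]
    rw [e]; exact pow_diff_asymp p q r hp hr
  -- eventual smallness of y
  have hsmall : ∀ᶠ x in l, |y x| ≤ 1/2 := by
    obtain ⟨C, hC⟩ := isBigO_iff.mp (reg_bigO p q hp)
    set C' : ℝ := |C| + 1 with hC'
    have hCpos : (0:ℝ) < C' := by positivity
    have hδ : (0:ℝ) < min 1 (1 / (2 * C')) := lt_min one_pos (div_pos one_pos (by linarith))
    filter_upwards [hC, Ioo_mem_nhdsGT_of_mem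
        (Set.left_mem_Ico.2 hδ)] with x hx1 hx2
    have hx0 : 0 < x := hx2.1
    have hxa : x < 1 := lt_of_lt_of_le hx2.2 (min_le_left _ _)
    have hxb : x ≤ 1 / (2 * C') := le_of_lt (lt_of_lt_of_le hx2.2 (min_le_right _ _))
    have h1 : |I x| ≤ C' * x := by
      have hb : ‖I x‖ ≤ C * ‖x ^ (q+1)‖ := hx1
      rw [Real.norm_eq_abs, Real.norm_eq_abs, abs_of_pos (pow_pos hx0 (q+1))] at hb
      have hxq : x ^ (q+1) ≤ x := by
        calc x ^ (q+1) ≤ x ^ 1 := pow_le_pow_of_le_one hx0.le hxa.le (by omega)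
          _ = x := pow_one x
      have hCle : C ≤ C' := by rw [hC']; linarith [le_abs_self C]
      have hb2 : C * x ^ (q+1) ≤ C' * x ^ (q+1) :=
        mul_le_mul_of_nonneg_right hCle (by positivity)
      have hb3 : C' * x ^ (q+1) ≤ C' * x := mul_le_mul_of_nonneg_left hxq hCpos.le
      calc |I x| ≤ C * x ^ (q+1) := hb
        _ ≤ C' * x := le_trans hb2 hb3
    have h2 : |I x| ≤ 1/2 := by
      calc |I x| ≤ C' * x := h1
        _ ≤ C' * (1 / (2*C')) := mul_le_mul_of_nonneg_left hxb hCpos.le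
        _ = 1/2 := by rw [mul_one_div, div_eq_iff (by positivity : (2:ℝ)*C' ≠ 0)]; ring
    calc |y x| = |I x| ^ r := by rw [hy, abs_pow]
      _ ≤ (1/2) ^ r := pow_le_pow_left₀ (abs_nonneg _) h2 r
      _ ≤ (1/2) ^ 1 := pow_le_pow_of_le_one (by norm_num) (by norm_num) hr
      _ = 1/2 := pow_one _
  -- term 1
  have hterm1 : (fun x : ℝ => -Real.log (1 - y x) - y x) =O[l]
      fun x => x ^ (r * (q+1) + 1) := by
    have hlog : (fun x : ℝ => -Real.log (1 - y x) - y x) =O[l] fun x => (y x) ^ 2 := by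
      rw [isBigO_iff]
      refine ⟨2, ?_⟩
      filter_upwards [hsmall] with x hx
      have hx1 : |y x| < 1 := lt_of_le_of_lt hx (by norm_num)
      have key := Real.abs_log_sub_add_sum_range_le hx1 1
      simp only [Finset.range_one, Finset.sum_singleton, pow_one, Nat.cast_zero, zero_add,
        div_one] at key
      have e : -Real.log (1 - y x) - y x = -(y x + Real.log (1 - y x)) := by ring
      rw [Real.norm_eq_abs, e, abs_neg, Real.norm_eq_abs, abs_pow]
      have h1y : 1/2 ≤ 1 - |y x| := by linarith
      calc |y x + Real.log (1 - y x)| ≤ |y x| ^ 2 / (1 - |y x|) := key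
        _ ≤ |y x| ^ 2 / (1/2) := by
            apply div_le_div_of_nonneg_left (by positivity) (by norm_num) h1y
        _ = 2 * |y x| ^ 2 := by ring
    have hy2 : (fun x : ℝ => (y x) ^ 2) =O[l] fun x => x ^ (r * (q+1) + 1) := by
      have e : (fun x : ℝ => (y x) ^ 2) = fun x => I x ^ (r * 2) := by
        funext x; rw [hy, ← pow_mul]
      rw [e]
      have h1 : (fun x : ℝ => I x ^ (r*2)) =O[l] fun x => (x ^ (q+1)) ^ (r*2) :=
        (reg_bigO p q hp).pow _
      have e2 : (fun x : ℝ => (x ^ (q+1)) ^ (r*2)) = fun x => x ^ ((q+1) * (r*2)) := by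
        funext x; rw [← pow_mul]
      rw [e2] at h1
      refine h1.trans (pow_isBigO_pow ?_)
      have h3 : (q+1) * (r*2) = r * (q+1) + r * (q+1) := by ring
      have h4 : 1 ≤ r * (q+1) := Nat.one_le_iff_ne_zero.2 (Nat.mul_ne_zero (by omega) (by omega))
      rw [h3]; linarith
    exact hlog.trans hy2
  have final := (hterm1.const_mul_left c₀).add (hterm2.const_mul_left c₀)
  have e : (fun x : ℝ => c₀ * (-Real.log (1 - y x) - y x)
        + c₀ * (y x - c ^ r * x ^ (r * (q+1))))
      = fun x : ℝ => -c₀ * Real.log (1 - I x ^ r) - c₀ * c ^ r * x ^ (r * (q+1)) := by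
    funext x; rw [hy]; ring
  rw [e] at final
  exact final
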